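/- Let G = (X, W) be a simple d-uniform hypergraph on n vertices, d ≥ 4, d dividing n, in which vertex x_i has degree r_i. Then the number of 1-factors of G satisfies φ(G) ≤ ((d-1)!^n / μ(n,d) · Π_{i=1}^n r_i)^{1/d}, where μ(n,d) = (d!^2 / (d^d · d!^{1/d}))^n. -/

import Mathlib

open scoped Classical in
/-- The permanent of a `d`-dimensional matrix of order `n`. -/
noncomputable def mper {n d : ℕ} (A : (Fin d → Fin n) → ℕ) : ℕ :=
  ∑ σ ∈ Finset.univ.filter (fun σ : Fin d → Equiv.Perm (Fin n) =>
      ∀ h : 0 < d, σ ⟨0, h⟩ = Equiv.refl (Fin n)),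
    ∏ i : Fin n, A (fun k => σ k i)

/-- `P` is a 1-factor of the hypergraph with hyperedge set `W`. -/
def IsOneFactor {n : ℕ} (W : Finset (Finset (Fin n))) (P : Finset (Finset (Fin n))) : Prop :=
  P ⊆ W ∧ ∀ v : Fin n, ∃! e, e ∈ P ∧ v ∈ e

/-- The number of 1-factors of the hypergraph with hyperedge set `W`. -/
noncomputable def numOneFactors {n : ℕ} (W : Finset (Finset (Fin n))) : ℕ :=
  {P : Finset (Finset (Fin n)) | IsOneFactor W P}.ncard

open scoped Classical in
/-- The `d`-dimensional adjacency matrix of the `d`-uniform hypergraph with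
hyperedge set `W` on `n` vertices. -/
noncomputable def adjMatrix (n d : ℕ) (W : Finset (Finset (Fin n))) :
    (Fin d → Fin n) → ℕ :=
  fun α => if Function.Injective α ∧ Finset.image α Finset.univ ∈ W then 1 else 0

open Finset in
open scoped Classical in
/-- The set of partial 1-factors covering exactly the vertex set `V`. -/
private noncomputable def partFactors {n : ℕ} (W : Finset (Finset (Fin n))) (V : Finset (Fin n)) :
    Finset (Finset (Finset (Fin n))) :=
  W.powerset.filter (fun P => (∀ v ∈ V, ∃! e, e ∈ P ∧ v ∈ e) ∧ ∀ e ∈ P, e ⊆ V)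

open Finset in
open scoped Classical in
private lemma key {n d : ℕ} (hd : 0 < d) (W : Finset (Finset (Fin n)))
    (huniform : ∀ e ∈ W, e.card = d) (V : Finset (Fin n)) :
    (partFactors W V).card ^ d ≤ ∏ i ∈ V, (W.filter (fun e => i ∈ e)).card := by
  induction V using Finset.strongInductionOn with
  | _ V ih =>
  by_cases hV : V = ∅
  · subst hV
    have h1 : (partFactors W ∅).card ≤ 1 := by
      apply Finset.card_le_one.mpr
      intro P hP Q hQ
      simp only [partFactors, mem_filter, mem_powerset] at hP hQ
      have hPe : P = ∅ := by
        apply Finset.eq_empty_of_forall_notMem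
        intro e he
        have h2 := hP.2.2 e he
        have h3 : e = ∅ := Finset.subset_empty.mp h2
        have := huniform e (hP.1 he)
        rw [h3] at this
        simp at this
        omega
      have hQe : Q = ∅ := by
        apply Finset.eq_empty_of_forall_notMem
        intro e he
        have h2 := hQ.2.2 e he
        have h3 : e = ∅ := Finset.subset_empty.mp h2
        have := huniform e (hQ.1 he)
        rw [h3] at this
        simp at this
        omega
      rw [hPe, hQe]
    calc (partFactors W ∅).card ^ d ≤ 1 ^ d := Nat.pow_le_pow_left h1 d
    _ = 1 := one_pow d
    _ = ∏ i ∈ (∅ : Finset (Fin n)), (W.filter (fun e => i ∈ e)).card := by simp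
  · obtain ⟨v, hvV, hvmin⟩ := V.exists_min_image
      (fun i => (W.filter (fun e => i ∈ e)).card) (Finset.nonempty_of_ne_empty hV)
    set S : Finset (Finset (Fin n)) := W.filter (fun e => v ∈ e ∧ e ⊆ V) with hS
    -- every P ∈ partFactors W V contains a unique edge in S
    have hsub : partFactors W V ⊆ S.biUnion (fun e => (partFactors W V).filter (fun P => e ∈ P)) := by
      intro P hP
      simp only [partFactors, mem_filter, mem_powerset] at hP
      obtain ⟨e, ⟨heP, hve⟩, -⟩ := hP.2.1 v hvV
      refine Finset.mem_biUnion.mpr ⟨e, ?_, ?_⟩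
      · exact mem_filter.mpr ⟨hP.1 heP, hve, hP.2.2 e heP⟩
      · simp only [partFactors, mem_filter, mem_powerset]
        exact ⟨⟨hP.1, hP.2⟩, heP⟩
    -- each fiber injects into partFactors W (V \ e)
    have hfiber : ∀ e ∈ S, ((partFactors W V).filter (fun P => e ∈ P)).card
        ≤ (partFactors W (V \ e)).card := by
      intro e heS
      simp only [hS, mem_filter] at heS
      obtain ⟨heW, hve, heV⟩ := heS
      apply Finset.card_le_card_of_injOn (fun P => P.erase e)
      · intro P hP
        simp only [Finset.mem_coe, partFactors, mem_filter, mem_powerset] at hP ⊢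
        obtain ⟨⟨hPW, huniq, hPV⟩, heP⟩ := hP
        refine ⟨(Finset.erase_subset e P).trans hPW, ?_, ?_⟩
        · intro u huVe
          rw [Finset.mem_sdiff] at huVe
          obtain ⟨e', ⟨he'P, hue'⟩, he'uniq⟩ := huniq u huVe.1
          have he'ne : e' ≠ e := by
            intro h; rw [h] at hue'; exact huVe.2 hue'
          refine ⟨e', ⟨Finset.mem_erase.mpr ⟨he'ne, he'P⟩, hue'⟩, ?_⟩
          intro e'' ⟨he''P, hue''⟩
          exact he'uniq e'' ⟨(Finset.mem_erase.mp he''P).2, hue''⟩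
        · intro e' he'
          rw [Finset.mem_erase] at he'
          intro u hue'
          rw [Finset.mem_sdiff]
          have huV : u ∈ V := hPV e' he'.2 hue'
          refine ⟨huV, fun hue => ?_⟩
          obtain ⟨e'', -, he''uniq⟩ := huniq u huV
          have h1 : e' = e'' := he''uniq e' ⟨he'.2, hue'⟩
          have h2 : e = e'' := he''uniq e ⟨heP, hue⟩
          exact he'.1 (h1.trans h2.symm)
      · intro P hP Q hQ hPQ
        simp only [partFactors, mem_filter, mem_powerset, coe_filter, Set.mem_setOf_eq] at hP hQ
        have : insert e (P.erase e) = insert e (Q.erase e) := by simp only at hPQ; rw [hPQ]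
        rwa [Finset.insert_erase hP.2, Finset.insert_erase hQ.2] at this
    by_cases hSe : S = ∅
    · have h0 : (partFactors W V).card = 0 := by
        have := Finset.card_le_card hsub
        rw [hSe] at this
        simpa using this
      rw [h0]
      rw [Nat.zero_pow hd]; exact Nat.zero_le _
    · obtain ⟨emax, hemaxS, hemax⟩ := S.exists_max_image
        (fun e => (partFactors W (V \ e)).card) (Finset.nonempty_of_ne_empty hSe)
      have hcard1 : (partFactors W V).card ≤ ∑ e ∈ S, ((partFactors W V).filter (fun P => e ∈ P)).card :=
        (Finset.card_le_card hsub).trans (Finset.card_biUnion_le)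
      have hcard2 : (partFactors W V).card ≤ S.card * (partFactors W (V \ emax)).card := by
        calc (partFactors W V).card
            ≤ ∑ e ∈ S, ((partFactors W V).filter (fun P => e ∈ P)).card := hcard1
          _ ≤ ∑ e ∈ S, (partFactors W (V \ emax)).card := by
              apply Finset.sum_le_sum
              intro e heS
              exact (hfiber e heS).trans (hemax e heS)
          _ = S.card * (partFactors W (V \ emax)).card := by rw [Finset.sum_const, smul_eq_mul]
      simp only [hS, mem_filter] at hemaxS
      obtain ⟨hemaxW, hvemax, hemaxV⟩ := hemaxS
      have hSr : S.card ≤ (W.filter (fun e => v ∈ e)).card := by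
        apply Finset.card_le_card
        intro e he
        simp only [hS, mem_filter] at he ⊢
        exact ⟨he.1, he.2.1⟩
      have hssub : V \ emax ⊂ V := by
        constructor
        · exact Finset.sdiff_subset
        · intro h
          have := h hvV
          rw [Finset.mem_sdiff] at this
          exact this.2 hvemax
      have hih := ih (V \ emax) hssub
      have hecard : emax.card = d := huniform emax hemaxW
      -- (r v)^d ≤ ∏ i ∈ emax, r i
      have hrv : (W.filter (fun e => v ∈ e)).card ^ d ≤ ∏ i ∈ emax, (W.filter (fun e => i ∈ e)).card := by
        calc (W.filter (fun e => v ∈ e)).card ^ d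
            = ∏ _i ∈ emax, (W.filter (fun e => v ∈ e)).card := by
              rw [Finset.prod_const, hecard]
          _ ≤ ∏ i ∈ emax, (W.filter (fun e => i ∈ e)).card := by
              apply Finset.prod_le_prod' -- nat version?
              intro i hi
              exact hvmin i (hemaxV hi)
      calc (partFactors W V).card ^ d
          ≤ (S.card * (partFactors W (V \ emax)).card) ^ d := Nat.pow_le_pow_left hcard2 d
        _ = S.card ^ d * (partFactors W (V \ emax)).card ^ d := mul_pow _ _ _
        _ ≤ (W.filter (fun e => v ∈ e)).card ^ d * (∏ i ∈ V \ emax, (W.filter (fun e => i ∈ e)).card) :=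
            Nat.mul_le_mul (Nat.pow_le_pow_left hSr d) hih
        _ ≤ (∏ i ∈ emax, (W.filter (fun e => i ∈ e)).card) * (∏ i ∈ V \ emax, (W.filter (fun e => i ∈ e)).card) :=
            Nat.mul_le_mul_right _ hrv
        _ = ∏ i ∈ V, (W.filter (fun e => i ∈ e)).card := by rw [mul_comm, Finset.prod_sdiff hemaxV]


open Finset in
private lemma numOneFactors_eq (n : ℕ) (W : Finset (Finset (Fin n))) :
    numOneFactors W = (partFactors W Finset.univ).card := by
  rw [numOneFactors]
  have h : {P : Finset (Finset (Fin n)) | IsOneFactor W P} = ↑(partFactors W Finset.univ) := by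
    ext P
    simp only [Set.mem_setOf_eq, IsOneFactor, partFactors, coe_filter, mem_powerset,
      mem_univ, forall_true_left, Finset.subset_univ, forall_const, and_true, true_implies]
    tauto
  rw [h, Set.ncard_coe_finset]


open Finset in
private lemma fact_le_pow' : ∀ m : ℕ, (m+1).factorial ≤ (m+1)^m := by
  intro m
  induction m with
  | zero => simp
  | succ k ih =>
    calc (k+2).factorial = (k+2) * (k+1).factorial := rfl
    _ ≤ (k+2) * (k+1)^k := Nat.mul_le_mul_left _ ih
    _ ≤ (k+2) * (k+2)^k := by
        apply Nat.mul_le_mul_left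
        exact Nat.pow_le_pow_left (by omega) k
    _ = (k+2)^(k+1) := by ring





/-- For a simple `d`-uniform hypergraph on `n` vertices (`d ≥ 4`, `d ∣ n`) in which vertex
`i` has degree `r i`, the number of 1-factors satisfies
`φ(G) ≤ ((d-1)!^n / μ(n,d) · ∏ r i)^(1/d)`, where `μ(n,d) = (d!²/(d^d · d!^(1/d)))^n`. -/

theorem stmt11 (n d : ℕ) (hd : 4 ≤ d) (hdn : d ∣ n) (W : Finset (Finset (Fin n)))
    (huniform : ∀ e ∈ W, e.card = d) (r : Fin n → ℕ)
    (hdeg : ∀ i : Fin n, (W.filter (fun e => i ∈ e)).card = r i) :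
    (numOneFactors W : ℝ) ≤
      (((d - 1).factorial : ℝ) ^ n /
        (((d.factorial : ℝ) ^ 2 /
          ((d : ℝ) ^ d * (d.factorial : ℝ) ^ ((1 : ℝ) / d))) ^ n) *
        ∏ i : Fin n, (r i : ℝ)) ^ ((1 : ℝ) / d) := by
  have hkeyN : numOneFactors W ^ d ≤ ∏ i : Fin n, r i := by
    rw [numOneFactors_eq]
    have hkey := key (by omega : 0 < d) W huniform Finset.univ
    simpa only [hdeg] using hkey
  have hd0 : (0:ℝ) < d := by exact_mod_cast (by omega : 0 < d)
  have hdne : (d:ℝ) ≠ 0 := hd0.ne'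
  set N := numOneFactors W with hN
  have hprod0 : (0:ℝ) ≤ ∏ i : Fin n, (r i : ℝ) :=
    Finset.prod_nonneg (fun i _ => by positivity)
  have hNd : (N:ℝ) ^ (d:ℕ) ≤ ∏ i : Fin n, (r i : ℝ) := by
    calc (N:ℝ)^(d:ℕ) = ((N^d : ℕ) : ℝ) := by push_cast; ring
    _ ≤ ((∏ i : Fin n, r i : ℕ):ℝ) := by exact_mod_cast hkeyN
    _ = ∏ i : Fin n, (r i:ℝ) := by push_cast; ring
  -- the prefactor is at least 1
  have hfac1 : (1:ℝ) ≤ (d.factorial:ℝ) ^ ((1:ℝ)/d) := by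
    calc (1:ℝ) = 1 ^ ((1:ℝ)/d) := (Real.one_rpow _).symm
    _ ≤ (d.factorial:ℝ) ^ ((1:ℝ)/d) := by
        apply Real.rpow_le_rpow zero_le_one _ (by positivity)
        exact_mod_cast Nat.one_le_iff_ne_zero.mpr (Nat.factorial_ne_zero d)
  have hddfac : (d:ℝ) * (d.factorial:ℝ) ≤ (d:ℝ)^d := by
    obtain ⟨m, rfl⟩ : ∃ m, d = m + 1 := ⟨d - 1, by omega⟩
    have h1 : (m+1) * (m+1).factorial ≤ (m+1)^(m+1) := by
      calc (m+1) * (m+1).factorial ≤ (m+1) * (m+1)^m :=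
          Nat.mul_le_mul_left _ (fact_le_pow' m)
      _ = (m+1)^(m+1) := by ring
    exact_mod_cast h1
  have hb0 : (0:ℝ) < (d.factorial:ℝ)^2 / ((d:ℝ)^d * (d.factorial:ℝ)^((1:ℝ)/d)) := by
    have : (0:ℝ) < (d.factorial:ℝ) := by exact_mod_cast d.factorial_pos
    positivity
  have hba : (d.factorial:ℝ)^2 / ((d:ℝ)^d * (d.factorial:ℝ)^((1:ℝ)/d)) ≤ ((d-1).factorial:ℝ) := by
    rw [div_le_iff₀ (by positivity)]
    have hfe : (d.factorial:ℝ) = (d:ℝ) * ((d-1).factorial:ℝ) := by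
      obtain ⟨m, rfl⟩ : ∃ m, d = m + 1 := ⟨d - 1, by omega⟩
      simp [Nat.factorial_succ]
    have hf0 : (0:ℝ) ≤ ((d-1).factorial:ℝ) := by positivity
    calc (d.factorial:ℝ)^2 = ((d-1).factorial:ℝ) * ((d:ℝ) * (d.factorial:ℝ)) := by
          rw [sq, hfe]; ring
    _ ≤ ((d-1).factorial:ℝ) * ((d:ℝ)^d) := by
          apply mul_le_mul_of_nonneg_left hddfac hf0
    _ ≤ ((d-1).factorial:ℝ) * ((d:ℝ)^d * (d.factorial:ℝ)^((1:ℝ)/d)) := by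
          rw [← mul_assoc]
          exact le_mul_of_one_le_right (by positivity) hfac1
  have hA : (1:ℝ) ≤ ((d-1).factorial:ℝ)^n /
      (((d.factorial:ℝ)^2 / ((d:ℝ)^d * (d.factorial:ℝ)^((1:ℝ)/d)))^n) := by
    rw [← div_pow]
    apply one_le_pow₀
    rw [le_div_iff₀ hb0, one_mul]
    exact hba
  have hN1 : (N:ℝ) = ((N:ℝ)^(d:ℕ)) ^ ((1:ℝ)/d) := by
    rw [← Real.rpow_natCast (N:ℝ) d, ← Real.rpow_mul (Nat.cast_nonneg N),
      mul_one_div, div_self hdne, Real.rpow_one]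
  rw [hN1]
  apply Real.rpow_le_rpow (by positivity) _ (by positivity)
  calc (N:ℝ)^(d:ℕ) ≤ ∏ i : Fin n, (r i : ℝ) := hNd
  _ ≤ _ := le_mul_of_one_le_left hprod0 hA
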